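/- Let A be a symmetric d×d real matrix with operator norm ‖A‖₂ ≤ c for some c > 0, and let ε be a real number with 0 < ε ≤ 1/(2cd). Then |det(I + εA) − (1 + ε·tr(A) + (ε²/2)·((tr A)² − tr(A²)))| ≤ ε³·c³·d³. -/

import Mathlib

open Finset

lemma esymm_one {ι : Type*} (x : ι → ℝ) (s : Finset ι) :
    ∑ S ∈ s.powersetCard 1, ∏ i ∈ S, x i = ∑ i ∈ s, x i := by
  rw [Finset.powersetCard_one, Finset.sum_map]
  simp

lemma esymm_two {ι : Type*} [DecidableEq ι] (x : ι → ℝ) (s : Finset ι) :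
    ∑ S ∈ s.powersetCard 2, ∏ i ∈ S, x i
      = ((∑ i ∈ s, x i) ^ 2 - ∑ i ∈ s, x i ^ 2) / 2 := by
  induction s using Finset.induction_on with
  | empty => rw [show ((∅:Finset ι).powersetCard 2) = ∅ by simp]; simp
  | insert a s ha ih =>
    rw [show (2:ℕ) = Nat.succ 1 from rfl, Finset.powersetCard_succ_insert ha]
    rw [Finset.sum_union]
    · rw [Finset.sum_image (fun S hS T hT hST => ?inj)]
      case inj =>
        have hS' := (Finset.mem_powersetCard.1 hS).1
        have hT' := (Finset.mem_powersetCard.1 hT).1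
        have haS : a ∉ S := fun h => ha (hS' h)
        have haT : a ∉ T := fun h => ha (hT' h)
        ext y
        constructor
        · intro hy
          have : y ∈ insert a T := hST ▸ Finset.mem_insert_of_mem hy
          rcases Finset.mem_insert.1 this with rfl | h
          · exact absurd hy haS
          · exact h
        · intro hy
          have : y ∈ insert a S := hST.symm ▸ Finset.mem_insert_of_mem hy
          rcases Finset.mem_insert.1 this with rfl | h
          · exact absurd hy haT
          · exact h
      have : ∀ S ∈ s.powersetCard 1, ∏ i ∈ insert a S, x i = x a * ∏ i ∈ S, x i := by
        intro S hS
        have hS' := (Finset.mem_powersetCard.1 hS).1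
        exact Finset.prod_insert (fun h => ha (hS' h))
      rw [Finset.sum_congr rfl this, ← Finset.mul_sum, esymm_one, ih,
        Finset.sum_insert ha, Finset.sum_insert ha]
      ring
    · rw [Finset.disjoint_right]
      intro T hT hT2
      obtain ⟨S, hS, rfl⟩ := Finset.mem_image.1 hT
      have hsub := (Finset.mem_powersetCard.1 hT2).1
      exact ha (hsub (Finset.mem_insert_self a S))

lemma geom_half_le_two (n : ℕ) : ∑ k ∈ Finset.range n, ((1:ℝ)/2) ^ k ≤ 2 := by
  induction n with
  | zero => norm_num
  | succ n ih =>
    have h : ((1:ℝ)/2)^n * (1 - 1) ≤ 0 := by norm_num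
    have := geom_sum_eq (by norm_num : (1:ℝ)/2 ≠ 1) (n+1)
    rw [this]
    have hp : (0:ℝ) < (1/2:ℝ)^(n+1) := by positivity
    rw [div_le_iff_of_neg (by norm_num : (1:ℝ)/2 - 1 < 0)]
    linarith

lemma keybound {d : ℕ} (x : Fin d → ℝ) (t : ℝ) (ht : 0 ≤ t)
    (hx : ∀ i, |x i| ≤ t) (htd : t * d ≤ 1 / 2) :
    |(∏ i, (1 + x i)) -
      (1 + (∑ i, x i) + ((∑ i, x i) ^ 2 - ∑ i, (x i) ^ 2) / 2)| ≤ (t * d) ^ 3 := by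
  classical
  set F : ℕ → ℝ := fun j => ∑ S ∈ (Finset.univ : Finset (Fin d)).powersetCard j, ∏ i ∈ S, x i
    with hF
  have hprod : (∏ i, (1 + x i)) = ∑ j ∈ Finset.range (d + 1), F j := by
    have h1 : (∏ i, (1 + x i)) = ∏ i, (x i + 1) := by
      refine Finset.prod_congr rfl fun i _ => by ring
    rw [h1, Finset.prod_add]
    have h2 : ∀ S ∈ (Finset.univ : Finset (Fin d)).powerset,
        (∏ i ∈ S, x i) * ∏ i ∈ Finset.univ \ S, (1:ℝ) = ∏ i ∈ S, x i := by
      intro S _; simp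
    rw [Finset.sum_congr rfl h2, Finset.sum_powerset]
    simp [hF, Finset.card_univ]
  -- extend range to d+3
  have hext : ∑ j ∈ Finset.range (d + 1), F j = ∑ j ∈ Finset.range (d + 3), F j := by
    refine Finset.sum_subset (Finset.range_subset_range.2 (by omega)) ?_
    intro j _ hj
    have hdj : d < j := by
      simp only [Finset.mem_range, not_lt] at hj
      omega
    simp only [hF]
    rw [show (Finset.univ : Finset (Fin d)).powersetCard j = ∅ by
      simp [Finset.powersetCard_eq_empty, Finset.card_univ, hdj]]
    simp
  -- split off first three terms
  have hsplit : ∑ j ∈ Finset.range (d + 3), F j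
      = (F 0 + F 1 + F 2) + ∑ j ∈ Finset.Ico 3 (d + 3), F j := by
    rw [Finset.range_eq_Ico, ← Finset.sum_Ico_consecutive _ (by omega : 0 ≤ 3) (by omega : 3 ≤ d + 3)]
    congr 1
    rw [← Finset.range_eq_Ico]
    simp [Finset.sum_range_succ]
  have hF0 : F 0 = 1 := by simp [hF]
  have hF1 : F 1 = ∑ i, x i := esymm_one x Finset.univ
  have hF2 : F 2 = ((∑ i, x i) ^ 2 - ∑ i, (x i) ^ 2) / 2 := esymm_two x Finset.univ
  have hmain : (∏ i, (1 + x i)) -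
      (1 + (∑ i, x i) + ((∑ i, x i) ^ 2 - ∑ i, (x i) ^ 2) / 2)
      = ∑ j ∈ Finset.Ico 3 (d + 3), F j := by
    rw [hprod, hext, hsplit, hF0, hF1, hF2]; ring
  rw [hmain]
  -- bound the tail
  have hterm : ∀ j ∈ Finset.Ico 3 (d + 3), |F j| ≤ (t*d)^3 / 6 * (1/2)^(j-3) := by
    intro j hj
    obtain ⟨hj3, _⟩ := Finset.mem_Ico.1 hj
    have h1 : |F j| ≤ (d.choose j : ℝ) * t ^ j := by
      calc |F j| ≤ ∑ S ∈ (Finset.univ : Finset (Fin d)).powersetCard j, |∏ i ∈ S, x i| :=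
            Finset.abs_sum_le_sum_abs _ _
        _ ≤ ∑ S ∈ (Finset.univ : Finset (Fin d)).powersetCard j, t ^ j := by
            refine Finset.sum_le_sum fun S hS => ?_
            rw [Finset.abs_prod]
            have hcard := (Finset.mem_powersetCard.1 hS).2
            calc ∏ i ∈ S, |x i| ≤ ∏ i ∈ S, t :=
                Finset.prod_le_prod (fun i _ => abs_nonneg _) (fun i _ => hx i)
              _ = t ^ j := by rw [Finset.prod_const, hcard]
        _ = (d.choose j : ℝ) * t ^ j := by
            rw [Finset.sum_const, Finset.card_powersetCard, Finset.card_univ, Fintype.card_fin,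
              nsmul_eq_mul]
    have h2 : (d.choose j : ℝ) * 6 ≤ (d:ℝ) ^ j := by
      have h6 : 6 ≤ Nat.factorial j := by
        calc 6 = Nat.factorial 3 := rfl
          _ ≤ Nat.factorial j := Nat.factorial_le hj3
      have : d.choose j * 6 ≤ d ^ j := by
        calc d.choose j * 6 ≤ d.choose j * Nat.factorial j := Nat.mul_le_mul_left _ h6
          _ = d.descFactorial j := by rw [Nat.descFactorial_eq_factorial_mul_choose]; ring
          _ ≤ d ^ j := Nat.descFactorial_le_pow _ _
      exact_mod_cast this
    have ht' : 0 ≤ t ^ j := pow_nonneg ht j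
    have h3 : (d.choose j : ℝ) * t ^ j ≤ (t*d)^j / 6 := by
      rw [le_div_iff₀ (by norm_num : (0:ℝ) < 6)]
      calc (d.choose j : ℝ) * t ^ j * 6 = ((d.choose j : ℝ) * 6) * t ^ j := by ring
        _ ≤ (d:ℝ)^j * t^j := mul_le_mul_of_nonneg_right h2 ht'
        _ = (t*d)^j := by rw [mul_pow]; ring
    have htd0 : 0 ≤ t * d := mul_nonneg ht (Nat.cast_nonneg d)
    have h4 : (t*d)^j ≤ (t*d)^3 * (1/2)^(j-3) := by
      have : (t*d)^j = (t*d)^3 * (t*d)^(j-3) := by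
        rw [← pow_add]; congr 1; omega
      rw [this]
      exact mul_le_mul_of_nonneg_left (pow_le_pow_left₀ htd0 htd _) (pow_nonneg htd0 3)
    calc |F j| ≤ (d.choose j : ℝ) * t ^ j := h1
      _ ≤ (t*d)^j / 6 := h3
      _ ≤ ((t*d)^3 * (1/2)^(j-3)) / 6 := by linarith
      _ = (t*d)^3 / 6 * (1/2)^(j-3) := by ring
  have htd0 : 0 ≤ t * d := mul_nonneg ht (Nat.cast_nonneg d)
  calc |∑ j ∈ Finset.Ico 3 (d + 3), F j| ≤ ∑ j ∈ Finset.Ico 3 (d + 3), |F j| :=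
        Finset.abs_sum_le_sum_abs _ _
    _ ≤ ∑ j ∈ Finset.Ico 3 (d + 3), (t*d)^3 / 6 * (1/2)^(j-3) := Finset.sum_le_sum hterm
    _ = (t*d)^3 / 6 * ∑ j ∈ Finset.Ico 3 (d + 3), ((1:ℝ)/2)^(j-3) := by rw [Finset.mul_sum]
    _ ≤ (t*d)^3 / 6 * 2 := by
        refine mul_le_mul_of_nonneg_left ?_ (by positivity)
        have : ∑ j ∈ Finset.Ico 3 (d + 3), ((1:ℝ)/2)^(j-3)
            = ∑ k ∈ Finset.range d, ((1:ℝ)/2)^k := by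
          rw [Finset.range_eq_Ico, Finset.sum_Ico_eq_sum_range]
          simp
        rw [this]
        exact geom_half_le_two d
    _ ≤ (t*d)^3 := by nlinarith [pow_nonneg htd0 3]


/-- The operator norm of a `d × d` real matrix with respect to the Euclidean
norm on `ℝ^d`. -/
noncomputable def matOpNorm {d : ℕ} (A : Matrix (Fin d) (Fin d) ℝ) : ℝ :=
  ‖Matrix.toEuclideanCLM (𝕜 := ℝ) A‖

theorem stmt0 {d : ℕ} (hd : 0 < d) (A : Matrix (Fin d) (Fin d) ℝ) (hA : A.IsSymm)
    (c : ℝ) (hc : 0 < c) (hAc : matOpNorm A ≤ c)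
    (ε : ℝ) (hε0 : 0 < ε) (hε : ε ≤ 1 / (2 * c * d)) :
    |(1 + ε • A).det -
        (1 + ε * A.trace + ε ^ 2 / 2 * (A.trace ^ 2 - (A * A).trace))| ≤
      ε ^ 3 * c ^ 3 * (d : ℝ) ^ 3 := by
  have hH : A.IsHermitian := by
    rwa [Matrix.IsHermitian, Matrix.conjTranspose_eq_transpose_of_trivial]
  set L := hH.eigenvalues with hL
  set U := (Matrix.IsHermitian.eigenvectorUnitary hH : Matrix (Fin d) (Fin d) ℝ) with hU
  have hU1 : U * star U = 1 :=
    (Matrix.mem_unitaryGroup_iff).mp (Matrix.IsHermitian.eigenvectorUnitary hH).2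
  have hU2 : star U * U = 1 := mul_eq_one_comm.mp hU1
  have hspec : A = U * Matrix.diagonal L * star U := by
    have h := hH.spectral_theorem
    have h2 : (RCLike.ofReal ∘ L : Fin d → ℝ) = L := funext fun i => rfl
    rwa [h2] at h
  set D := Matrix.diagonal L with hD
  have htrace : A.trace = ∑ i, L i := by
    rw [hspec, Matrix.trace_mul_cycle, hU2, Matrix.one_mul, Matrix.trace_diagonal]
  have hAA : A * A = U * (D * D) * star U := by
    rw [hspec]
    calc U*D*star U*(U*D*star U) = U*(D*((star U*U)*(D*star U))) := by
          simp only [Matrix.mul_assoc]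
      _ = U * (D*D) * star U := by rw [hU2, Matrix.one_mul]; simp only [Matrix.mul_assoc]
  have htrace2 : (A * A).trace = ∑ i, (L i) ^ 2 := by
    rw [hAA, Matrix.trace_mul_cycle, hU2, Matrix.one_mul, hD,
      Matrix.diagonal_mul_diagonal, Matrix.trace_diagonal]
    exact Finset.sum_congr rfl fun i _ => (sq (L i)).symm
  have hev : ∀ i, |L i| ≤ c := by
    intro i
    set v := hH.eigenvectorBasis i with hv
    have hv1 : ‖v‖ = 1 := hH.eigenvectorBasis.orthonormal.1 i
    have hb := hH.mulVec_eigenvectorBasis i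
    have happ : Matrix.toEuclideanCLM (𝕜 := ℝ) A v = (L i) • v := by
      apply (WithLp.equiv 2 (Fin d → ℝ)).injective
      rw [WithLp.equiv_apply, Matrix.ofLp_toEuclideanCLM]
      simpa using hb
    have h1 : |L i| = ‖(L i) • v‖ := by
      rw [norm_smul, hv1, mul_one, Real.norm_eq_abs]
    rw [h1, ← happ]
    calc ‖Matrix.toEuclideanCLM (𝕜 := ℝ) A v‖
        ≤ ‖Matrix.toEuclideanCLM (𝕜 := ℝ) A‖ * ‖v‖ :=
          (Matrix.toEuclideanCLM (𝕜 := ℝ) A).le_opNorm v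
      _ ≤ c := by rw [hv1, mul_one]; exact hAc
  -- determinant
  have hdiag : (1 : Matrix (Fin d) (Fin d) ℝ) + ε • D
      = Matrix.diagonal (fun i => 1 + ε * L i) := by
    ext i j
    rcases eq_or_ne i j with rfl | h
    · simp [hD, Matrix.diagonal_apply_eq, Matrix.one_apply_eq]
    · simp [hD, Matrix.diagonal_apply_ne _ h, Matrix.one_apply_ne h]
  have h1A : (1 : Matrix (Fin d) (Fin d) ℝ) + ε • A = U * (1 + ε • D) * star U := by
    have : U * (1 + ε • D) * star U = 1 + ε • A := by
      calc U * (1 + ε • D) * star U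
          = U * star U + U * (ε • D) * star U := by
            rw [Matrix.mul_add, Matrix.add_mul, Matrix.mul_one]
        _ = 1 + ε • (U * D * star U) := by rw [hU1, Matrix.mul_smul, Matrix.smul_mul]
        _ = 1 + ε • A := by rw [← hspec]
    exact this.symm
  have hdetU : U.det * (star U).det = 1 := by
    rw [← Matrix.det_mul, hU1, Matrix.det_one]
  have hdet : (1 + ε • A).det = ∏ i, (1 + ε * L i) := by
    rw [h1A, hdiag, Matrix.det_mul, Matrix.det_mul, Matrix.det_diagonal]
    linear_combination (∏ i, (1 + ε * L i)) * hdetU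
  -- apply keybound
  have hd' : (0:ℝ) < d := by exact_mod_cast hd
  have htd : (ε * c) * d ≤ 1 / 2 := by
    have h2cd : (0:ℝ) < 2 * c * d := by positivity
    have := (le_div_iff₀ h2cd).1 hε
    nlinarith
  have hxabs : ∀ i, |ε * L i| ≤ ε * c := by
    intro i
    rw [abs_mul, abs_of_pos hε0]
    exact mul_le_mul_of_nonneg_left (hev i) hε0.le
  have hkey := keybound (fun i => ε * L i) (ε * c) (by positivity) hxabs htd
  have heq : (1 + ε • A).det -
      (1 + ε * A.trace + ε ^ 2 / 2 * (A.trace ^ 2 - (A * A).trace))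
      = (∏ i, (1 + ε * L i)) -
        (1 + (∑ i, ε * L i) +
          ((∑ i, ε * L i) ^ 2 - ∑ i, (ε * L i) ^ 2) / 2) := by
    rw [hdet, htrace, htrace2, Finset.mul_sum]
    have e2 : ∑ i, (ε * L i) ^ 2 = ε ^ 2 * ∑ i, (L i) ^ 2 := by
      rw [Finset.mul_sum]
      exact Finset.sum_congr rfl fun i _ => by ring
    rw [e2, ← Finset.mul_sum]
    ring
  rw [heq]
  refine hkey.trans (le_of_eq ?_)
  ring
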